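/- If (ψ₁,c₁) and (ψ₂,c₂) are both solutions of the differential system (D), then c₁ = c₂. -/

import Mathlib

open MeasureTheory Filter Set

private lemma N_props (N : ℝ → ℝ)
    (hN : ∀ s, N s = Real.exp (-(s ^ 2) / 2) / Real.sqrt (2 * Real.pi)) :
    (∀ s, 0 < N s) ∧ Continuous N ∧ Integrable N := by
  have hs : (0:ℝ) < Real.sqrt (2 * Real.pi) := Real.sqrt_pos.mpr (by positivity)
  have hfun : N = fun s => Real.exp (-(s ^ 2) / 2) / Real.sqrt (2 * Real.pi) := funext hN
  refine ⟨fun s => by rw [hN]; positivity, ?_, ?_⟩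
  · rw [hfun]; continuity
  · rw [hfun]
    have h2 : Integrable (fun s : ℝ => Real.exp (-(1/2 : ℝ) * s ^ 2)) :=
      integrable_exp_neg_mul_sq (by norm_num)
    have heq : (fun s : ℝ => Real.exp (-(s ^ 2) / 2) / Real.sqrt (2 * Real.pi))
        = fun s : ℝ => (Real.sqrt (2 * Real.pi))⁻¹ * Real.exp (-(1/2 : ℝ) * s ^ 2) := by
      funext s; rw [mul_comm, div_eq_mul_inv]; ring_nf
    rw [heq]
    exact h2.const_mul _

private lemma sol_pos (fμ H : ℝ → ℝ) (ε : ℝ) (hε : 0 < ε)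
    (hfpos : ∀ x ∈ Set.Icc (0:ℝ) 1, 0 < fμ x)
    (hH'lb : ∀ x : ℝ, ε < deriv H x)
    (N : ℝ → ℝ) (hNpos : ∀ s, 0 < N s)
    (ψ : ℝ → ℝ) (c : ℝ) (hψC2 : ContDiff ℝ 2 ψ)
    (heq : ∀ s : ℝ, fμ (deriv ψ s) * deriv (deriv ψ) s * deriv H (s * deriv ψ s - ψ s) = c * N s)
    (hbot : Tendsto (deriv ψ) atBot (nhds 0)) (htop : Tendsto (deriv ψ) atTop (nhds 1)) :
    0 < c ∧ (∀ s, 0 < deriv ψ s ∧ deriv ψ s < 1) ∧ (∀ s, 0 < deriv (deriv ψ) s) := by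
  have hH'pos : ∀ y, 0 < deriv H y := fun y => hε.trans (hH'lb y)
  have hψ'C1 : ContDiff ℝ 1 (deriv ψ) := by
    have h2 : (2 : WithTop ℕ∞) = 1 + 1 := by norm_num
    rw [h2, contDiff_succ_iff_deriv] at hψC2
    exact hψC2.2.2
  have hψ'diff : Differentiable ℝ (deriv ψ) := (contDiff_one_iff_deriv.mp hψ'C1).1
  have hψ'cont : Continuous (deriv ψ) := hψ'diff.continuous
  -- step 1 : c ≠ 0
  have hc0 : c ≠ 0 := by
    intro hc
    subst hc
    have hzero : ∀ s, deriv ψ s ∈ Set.Ioo (0:ℝ) 1 → deriv (deriv ψ) s = 0 := by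
      intro s hs
      have h := heq s
      rw [zero_mul] at h
      have hf : 0 < fμ (deriv ψ s) := hfpos _ (Ioo_subset_Icc_self hs)
      rcases mul_eq_zero.mp h with h' | h'
      · rcases mul_eq_zero.mp h' with h'' | h''
        · exact absurd h'' hf.ne'
        · exact h''
      · exact absurd h' (hH'pos _).ne'
    obtain ⟨a, ha⟩ : ∃ a, deriv ψ a < 1/2 :=
      ((hbot.eventually (eventually_lt_nhds (by norm_num : (0:ℝ) < 1/2))).exists)
    obtain ⟨b, hb⟩ : ∃ b, 1/2 < deriv ψ b :=
      ((htop.eventually (eventually_gt_nhds (by norm_num : (1:ℝ)/2 < 1))).exists)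
    obtain ⟨s₀, -, hs₀⟩ : ∃ s₀ ∈ Set.uIcc a b, deriv ψ s₀ = 1/2 := by
      have h12 : (1/2 : ℝ) ∈ Set.uIcc (deriv ψ a) (deriv ψ b) := by
        rw [Set.mem_uIcc]; left; exact ⟨ha.le, hb.le⟩
      exact intermediate_value_uIcc (f := deriv ψ) (a := a) (b := b) hψ'cont.continuousOn h12
    by_cases hB : ∃ t, s₀ ≤ t ∧ deriv ψ t ≠ 1/2
    · obtain ⟨t₀, ht₀s, ht₀⟩ := hB
      set B := {t | s₀ ≤ t ∧ deriv ψ t ≠ 1/2} with hBdef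
      have hBne : B.Nonempty := ⟨t₀, ht₀s, ht₀⟩
      have hBbdd : BddBelow B := ⟨s₀, fun t ht => ht.1⟩
      set u := sInf B with hu
      have hus₀ : s₀ ≤ u := le_csInf hBne fun t ht => ht.1
      have hhalf : ∀ t, s₀ ≤ t → t < u → deriv ψ t = 1/2 := by
        intro t hts htu
        by_contra h
        exact absurd (csInf_le hBbdd ⟨hts, h⟩) (not_le.mpr htu)
      have hxu : deriv ψ u = 1/2 := by
        rcases eq_or_lt_of_le hus₀ with h | h
        · rw [← h, hs₀]
        · have htd : Tendsto (deriv ψ) (nhdsWithin u (Set.Iio u)) (nhds (deriv ψ u)) :=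
            (hψ'cont.continuousAt).continuousWithinAt.tendsto
          have hev : ∀ᶠ t in nhdsWithin u (Set.Iio u), deriv ψ t = 1/2 := by
            filter_upwards [Ioo_mem_nhdsLT_of_mem (⟨h, le_refl u⟩ : u ∈ Set.Ioc s₀ u)] with t ht
            exact hhalf t ht.1.le ht.2
          have h12 : Tendsto (fun _ : ℝ => (1/2:ℝ)) (nhdsWithin u (Set.Iio u)) (nhds (deriv ψ u)) :=
            htd.congr' hev
          exact (tendsto_nhds_unique h12 tendsto_const_nhds)
      obtain ⟨δ, hδ, hδprop⟩ : ∃ δ > 0, ∀ t, |t - u| < δ → deriv ψ t ∈ Set.Ioo (0:ℝ) 1 := by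
        have hca : ContinuousAt (deriv ψ) u := hψ'cont.continuousAt
        have hmem : Set.Ioo (0:ℝ) 1 ∈ nhds (deriv ψ u) := by
          rw [hxu]; exact Ioo_mem_nhds (by norm_num) (by norm_num)
        rcases Metric.mem_nhds_iff.mp (hca.preimage_mem_nhds hmem) with ⟨δ, hδ, hsub⟩
        exact ⟨δ, hδ, fun t ht => hsub (by simpa [Real.dist_eq] using ht)⟩
      have hconst : ∀ t ∈ Set.Icc u (u + δ/2), deriv ψ t = deriv ψ u := by
        apply constant_of_has_deriv_right_zero (hψ'cont.continuousOn)
        intro t ht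
        have htmem : |t - u| < δ := by
          rw [abs_lt]; constructor
          · linarith [ht.1]
          · linarith [ht.2]
        have h0 : deriv (deriv ψ) t = 0 := hzero t (hδprop t htmem)
        have hd : HasDerivAt (deriv ψ) 0 t := h0 ▸ (hψ'diff t).hasDerivAt
        exact hd.hasDerivWithinAt
      have hcontra : u + δ/2 ≤ u := by
        rw [hu]
        apply le_csInf hBne
        intro t ht
        by_contra hlt
        push_neg at hlt
        rcases lt_or_ge t u with h | h
        · exact ht.2 (hhalf t ht.1 h)
        · exact ht.2 ((hconst t ⟨h, hlt.le⟩).trans hxu)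
      linarith
    · push_neg at hB
      have hth : Tendsto (deriv ψ) atTop (nhds (1/2 : ℝ)) := by
        apply Tendsto.congr' _ (tendsto_const_nhds (α := ℝ) (f := atTop))
        filter_upwards [eventually_ge_atTop s₀] with t ht
        exact (hB t ht).symm
      have := tendsto_nhds_unique hth htop
      norm_num at this
  -- step 2 : ψ'' never vanishes
  have hne : ∀ s, deriv (deriv ψ) s ≠ 0 := by
    intro s h
    have h2 := heq s
    rw [h, mul_zero, zero_mul] at h2
    rcases mul_eq_zero.mp h2.symm with h' | h'
    · exact hc0 h'
    · exact (hNpos s).ne' h'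
  -- step 3 : sign dichotomy
  have hsign : (∀ s, 0 < deriv (deriv ψ) s) ∨ (∀ s, deriv (deriv ψ) s < 0) := by
    by_contra h
    push_neg at h
    obtain ⟨⟨a, ha⟩, ⟨b, hb⟩⟩ := h
    have ha' : deriv (deriv ψ) a < 0 := lt_of_le_of_ne ha (hne a)
    have hb' : 0 < deriv (deriv ψ) b := lt_of_le_of_ne hb (Ne.symm (hne b))
    have hψ''cont : Continuous (deriv (deriv ψ)) := (contDiff_one_iff_deriv.mp hψ'C1).2
    obtain ⟨s, -, hs⟩ : ∃ s ∈ Set.uIcc a b, deriv (deriv ψ) s = 0 := by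
      have h0 : (0:ℝ) ∈ Set.uIcc (deriv (deriv ψ) a) (deriv (deriv ψ) b) := by
        rw [Set.mem_uIcc]; left; exact ⟨ha, hb⟩
      exact intermediate_value_uIcc hψ''cont.continuousOn h0
    exact hne s hs
  rcases hsign with hpos | hneg
  · have hmono : StrictMono (deriv ψ) := strictMono_of_deriv_pos hpos
    have hub : ∀ s, deriv ψ s ≤ 1 := fun s =>
      ge_of_tendsto htop (eventually_atTop.mpr ⟨s, fun t ht => hmono.monotone ht⟩)
    have hub' : ∀ s, deriv ψ s < 1 := fun s => lt_of_lt_of_le (hmono (lt_add_one s)) (hub (s+1))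
    have hlb : ∀ s, 0 ≤ deriv ψ s := fun s =>
      le_of_tendsto hbot (eventually_atBot.mpr ⟨s, fun t ht => hmono.monotone ht⟩)
    have hlb' : ∀ s, 0 < deriv ψ s := fun s =>
      lt_of_le_of_lt (hlb (s-1)) (hmono (by linarith))
    have hcN : 0 < c * N 0 := by
      rw [← heq 0]
      exact mul_pos (mul_pos (hfpos _ ⟨(hlb' 0).le, (hub' 0).le⟩) (hpos 0)) (hH'pos _)
    have hc : 0 < c := by
      by_contra h
      push_neg at h
      nlinarith [hNpos 0]
    exact ⟨hc, fun s => ⟨hlb' s, hub' s⟩, hpos⟩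
  · exfalso
    have hanti : StrictAnti (deriv ψ) := strictAnti_of_deriv_neg hneg
    have h1 : deriv ψ 0 ≤ 0 :=
      ge_of_tendsto hbot (eventually_atBot.mpr ⟨0, fun t ht => hanti.antitone ht⟩)
    have h2 : 1 ≤ deriv ψ 0 :=
      le_of_tendsto htop (eventually_atTop.mpr ⟨0, fun t ht => hanti.antitone ht⟩)
    linarith

private lemma exists_inv (g : ℝ → ℝ) (hmono : StrictMono g) (hcont : Continuous g)
    (hbot : Tendsto g atBot (nhds 0)) (htop : Tendsto g atTop (nhds 1)) :
    ∃ ι : ℝ → ℝ, (∀ y ∈ Set.Ioo (0:ℝ) 1, g (ι y) = y) ∧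
      (∀ y ∈ Set.Ioo (0:ℝ) 1, ContinuousAt ι y) ∧ (∀ s, ι (g s) = s) := by
  have hsurj : ∀ y ∈ Set.Ioo (0:ℝ) 1, ∃ s, g s = y := by
    intro y hy
    obtain ⟨a, ha⟩ : ∃ a, g a < y := (hbot.eventually (eventually_lt_nhds hy.1)).exists
    obtain ⟨b, hb⟩ : ∃ b, y < g b := (htop.eventually (eventually_gt_nhds hy.2)).exists
    obtain ⟨s, -, hs⟩ : ∃ s ∈ Set.uIcc a b, g s = y := by
      apply intermediate_value_uIcc hcont.continuousOn
      rw [Set.mem_uIcc]; left; exact ⟨ha.le, hb.le⟩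
    exact ⟨s, hs⟩
  classical
  set ι : ℝ → ℝ := fun y => if hy : y ∈ Set.Ioo (0:ℝ) 1 then Classical.choose (hsurj y hy) else 0
    with hιdef
  have hινal : ∀ y (hy : y ∈ Set.Ioo (0:ℝ) 1), g (ι y) = y := by
    intro y hy
    rw [hιdef]; simp only [hy, dif_pos]
    exact Classical.choose_spec (hsurj y hy)
  have hιg : ∀ s, ι (g s) = s := by
    intro s
    have hgs : g s ∈ Set.Ioo (0:ℝ) 1 := by
      constructor
      · have : ∀ t, 0 ≤ g t := fun t =>
          le_of_tendsto hbot (eventually_atBot.mpr ⟨t, fun u hu => hmono.monotone hu⟩)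
        exact lt_of_le_of_lt (this (s-1)) (hmono (by linarith))
      · have : ∀ t, g t ≤ 1 := fun t =>
          ge_of_tendsto htop (eventually_atTop.mpr ⟨t, fun u hu => hmono.monotone hu⟩)
        exact lt_of_lt_of_le (hmono (lt_add_one s)) (this (s+1))
    exact hmono.injective (hινal _ hgs)
  have hιmono : StrictMonoOn ι (Set.Ioo (0:ℝ) 1) := by
    intro y hy z hz hyz
    have := hινal y hy
    have := hινal z hz
    by_contra h
    push_neg at h
    have : g (ι z) ≤ g (ι y) := hmono.monotone h
    rw [hινal y hy, hινal z hz] at this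
    linarith
  have hιimg : ι '' (Set.Ioo (0:ℝ) 1) = Set.univ := by
    apply Set.eq_univ_of_forall
    intro t
    have hgt : g t ∈ Set.Ioo (0:ℝ) 1 := by
      constructor
      · have : ∀ u, 0 ≤ g u := fun u =>
          le_of_tendsto hbot (eventually_atBot.mpr ⟨u, fun v hv => hmono.monotone hv⟩)
        exact lt_of_le_of_lt (this (t-1)) (hmono (by linarith))
      · have : ∀ u, g u ≤ 1 := fun u =>
          ge_of_tendsto htop (eventually_atTop.mpr ⟨u, fun v hv => hmono.monotone hv⟩)
        exact lt_of_lt_of_le (hmono (lt_add_one t)) (this (t+1))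
    exact ⟨g t, hgt, hιg t⟩
  refine ⟨ι, hινal, ?_, hιg⟩
  intro y hy
  apply hιmono.continuousAt_of_image_mem_nhds (Ioo_mem_nhds hy.1 hy.2)
  rw [hιimg]
  exact univ_mem

private lemma key (fμ H : ℝ → ℝ) (ε K : ℝ)
    (hε : 0 < ε) (hεK : ε < K)
    (hfpos : ∀ x ∈ Set.Icc (0 : ℝ) 1, 0 < fμ x)
    (hH : ContDiff ℝ 2 H)
    (hHconv : StrictConvexOn ℝ Set.univ H)
    (hH'lb : ∀ x : ℝ, ε < deriv H x)
    (N : ℝ → ℝ) (hNpos : ∀ s, 0 < N s) (hNcont : Continuous N) (hNint : Integrable N)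
    (ψ₁ ψ₂ : ℝ → ℝ) (c₁ c₂ : ℝ)
    (hψ₁C2 : ContDiff ℝ 2 ψ₁)
    (heq₁ : ∀ s : ℝ,
      fμ (deriv ψ₁ s) * deriv (deriv ψ₁) s * deriv H (s * deriv ψ₁ s - ψ₁ s) = c₁ * N s)
    (hbot₁ : Tendsto (deriv ψ₁) atBot (nhds 0))
    (htop₁ : Tendsto (deriv ψ₁) atTop (nhds 1))
    (hint₁ : Integrable (fun z => ψ₁ z * N z))
    (hzero₁ : (∫ z, ψ₁ z * N z) = 0)
    (hψ₂C2 : ContDiff ℝ 2 ψ₂)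
    (heq₂ : ∀ s : ℝ,
      fμ (deriv ψ₂ s) * deriv (deriv ψ₂) s * deriv H (s * deriv ψ₂ s - ψ₂ s) = c₂ * N s)
    (hbot₂ : Tendsto (deriv ψ₂) atBot (nhds 0))
    (htop₂ : Tendsto (deriv ψ₂) atTop (nhds 1))
    (hint₂ : Integrable (fun z => ψ₂ z * N z))
    (hzero₂ : (∫ z, ψ₂ z * N z) = 0)
    (hc₁ : 0 < c₁) (hx₁ : ∀ s, 0 < deriv ψ₁ s ∧ deriv ψ₁ s < 1)
    (hq₁ : ∀ s, 0 < deriv (deriv ψ₁) s)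
    (hc₂ : 0 < c₂) (hx₂ : ∀ s, 0 < deriv ψ₂ s ∧ deriv ψ₂ s < 1)
    (hq₂ : ∀ s, 0 < deriv (deriv ψ₂) s)
    (hlt : c₂ < c₁) : False := by
  -- basic smoothness facts
  have hH'mono : StrictMono (deriv H) := by
    have hHdiff : Differentiable ℝ H := hH.differentiable (by norm_num)
    have := hHconv.strictMonoOn_deriv (fun x _ => hHdiff.differentiableAt)
    exact strictMonoOn_univ.mp this
  have hψ'C1 : ∀ (ψ : ℝ → ℝ), ContDiff ℝ 2 ψ → ContDiff ℝ 1 (deriv ψ) := by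
    intro ψ hψ
    have h2 : (2 : WithTop ℕ∞) = 1 + 1 := by norm_num
    rw [h2, contDiff_succ_iff_deriv] at hψ
    exact hψ.2.2
  have hx₁diff : Differentiable ℝ (deriv ψ₁) :=
    (contDiff_one_iff_deriv.mp (hψ'C1 ψ₁ hψ₁C2)).1
  have hx₂diff : Differentiable ℝ (deriv ψ₂) :=
    (contDiff_one_iff_deriv.mp (hψ'C1 ψ₂ hψ₂C2)).1
  have hx₁cont : Continuous (deriv ψ₁) := hx₁diff.continuous
  have hx₂cont : Continuous (deriv ψ₂) := hx₂diff.continuous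
  have hq₁cont : Continuous (deriv (deriv ψ₁)) := (contDiff_one_iff_deriv.mp (hψ'C1 ψ₁ hψ₁C2)).2
  have hq₂cont : Continuous (deriv (deriv ψ₂)) := (contDiff_one_iff_deriv.mp (hψ'C1 ψ₂ hψ₂C2)).2
  have hψ₁diff : Differentiable ℝ ψ₁ := hψ₁C2.differentiable (by norm_num)
  have hψ₂diff : Differentiable ℝ ψ₂ := hψ₂C2.differentiable (by norm_num)
  have hx₂mono : StrictMono (deriv ψ₂) := by
    apply strictMono_of_deriv_pos
    intro s; exact hq₂ s
  have hx₁mono : StrictMono (deriv ψ₁) := by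
    apply strictMono_of_deriv_pos
    intro s; exact hq₁ s
  -- the matching function θ
  obtain ⟨ι, hιval, hιcont, hιg⟩ := exists_inv (deriv ψ₂) hx₂mono hx₂cont hbot₂ htop₂
  set θ : ℝ → ℝ := fun s => ι (deriv ψ₁ s) with hθdef
  have hθval : ∀ s, deriv ψ₂ (θ s) = deriv ψ₁ s := fun s => hιval _ ⟨(hx₁ s).1, (hx₁ s).2⟩
  have hθd : ∀ s, HasDerivAt θ ((deriv (deriv ψ₂) (θ s))⁻¹ * deriv (deriv ψ₁) s) s := by
    intro s
    have hι : HasDerivAt ι (deriv (deriv ψ₂) (ι (deriv ψ₁ s)))⁻¹ (deriv ψ₁ s) := by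
      apply HasDerivAt.of_local_left_inverse (hιcont _ ⟨(hx₁ s).1, (hx₁ s).2⟩)
        ((hx₂diff _).hasDerivAt) (ne_of_gt (hq₂ _))
      filter_upwards [Ioo_mem_nhds (hx₁ s).1 (hx₁ s).2] with z hz
      exact hιval z hz
    exact hι.comp s ((hx₁diff s).hasDerivAt)
  have hθcont : Continuous θ :=
    continuous_iff_continuousAt.mpr fun s =>
      (hιcont _ ⟨(hx₁ s).1, (hx₁ s).2⟩).comp hx₁cont.continuousAt
  have hθtop : Tendsto θ atTop atTop := by
    rw [tendsto_atTop]
    intro M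
    filter_upwards [htop₁.eventually (eventually_gt_nhds (hx₂ M).2)] with s hs
    have : deriv ψ₂ M < deriv ψ₂ (θ s) := by rw [hθval s]; exact hs
    exact (hx₂mono.lt_iff_lt.mp this).le
  have hθbot : Tendsto θ atBot atBot := by
    rw [tendsto_atBot]
    intro M
    filter_upwards [hbot₁.eventually (eventually_lt_nhds (hx₂ M).1)] with s hs
    have : deriv ψ₂ (θ s) < deriv ψ₂ M := by rw [hθval s]; exact hs
    exact (hx₂mono.lt_iff_lt.mp this).le
  -- the functions g₁, g₂ and w
  set g₁ : ℝ → ℝ := fun s => s * deriv ψ₁ s - ψ₁ s with hg₁def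
  set g₂ : ℝ → ℝ := fun s => s * deriv ψ₂ s - ψ₂ s with hg₂def
  set w : ℝ → ℝ := fun s => g₁ s - g₂ (θ s) with hwdef
  have hg₂d : ∀ s, HasDerivAt g₂ (s * deriv (deriv ψ₂) s) s := by
    intro s
    have h1 : HasDerivAt (fun t => t * deriv ψ₂ t) (1 * deriv ψ₂ s + s * deriv (deriv ψ₂) s) s :=
      (hasDerivAt_id s).mul ((hx₂diff s).hasDerivAt)
    have h2 := h1.sub ((hψ₂diff s).hasDerivAt)
    exact h2.congr_deriv (by ring)
  have hg₁d : ∀ s, HasDerivAt g₁ (s * deriv (deriv ψ₁) s) s := by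
    intro s
    have h1 : HasDerivAt (fun t => t * deriv ψ₁ t) (1 * deriv ψ₁ s + s * deriv (deriv ψ₁) s) s :=
      (hasDerivAt_id s).mul ((hx₁diff s).hasDerivAt)
    have h2 := h1.sub ((hψ₁diff s).hasDerivAt)
    exact h2.congr_deriv (by ring)
  have hwd : ∀ s, HasDerivAt w (deriv (deriv ψ₁) s * (s - θ s)) s := by
    intro s
    have h2 : HasDerivAt (fun t => g₂ (θ t))
        (θ s * deriv (deriv ψ₂) (θ s) * ((deriv (deriv ψ₂) (θ s))⁻¹ * deriv (deriv ψ₁) s)) s :=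
      (hg₂d (θ s)).comp s (hθd s)
    have h3 := (hg₁d s).sub h2
    refine h3.congr_deriv ?_
    field_simp [ne_of_gt (hq₂ (θ s))]
  have hwcont : Continuous w := by
    have : Differentiable ℝ w := fun s => (hwd s).differentiableAt
    exact this.continuous
  have hderivw : ∀ s, deriv w s = deriv (deriv ψ₁) s * (s - θ s) := fun s => (hwd s).deriv
  -- the Gaussian cdf-like function Φ
  set Φ : ℝ → ℝ := fun r => ∫ t in (0:ℝ)..r, N t with hΦdef
  have hΦd : ∀ r, HasDerivAt Φ (N r) r := by
    intro r
    apply intervalIntegral.integral_hasDerivAt_right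
      (hNcont.intervalIntegrable _ _)
      (hNcont.stronglyMeasurableAtFilter _ _)
      hNcont.continuousAt
  have hΦsub : ∀ a b : ℝ, Φ b - Φ a = ∫ t in a..b, N t := by
    intro a b
    rw [intervalIntegral.integral_eq_sub_of_hasDerivAt (fun t _ => hΦd t)
      (hNcont.intervalIntegrable _ _)]
  -- tail integrals
  set J : ℝ → ℝ := fun s => ∫ t in Set.Ioi s, N t with hJdef
  set Jm : ℝ → ℝ := fun s => ∫ t in Set.Iic s, N t with hJmdef
  have hIocpos : ∀ a b : ℝ, a < b → 0 < ∫ t in Set.Ioc a b, N t := by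
    intro a b hab
    rw [← intervalIntegral.integral_of_le hab.le]
    exact intervalIntegral.intervalIntegral_pos_of_pos (hNcont.intervalIntegrable _ _) hNpos hab
  have hJsplit : ∀ a b : ℝ, a ≤ b → J a = (∫ t in Set.Ioc a b, N t) + J b := by
    intro a b hab
    rw [hJdef]
    simp only
    rw [← Set.Ioc_union_Ioi_eq_Ioi hab]
    rw [setIntegral_union (Set.Ioc_disjoint_Ioi le_rfl) measurableSet_Ioi
      (hNint.integrableOn) (hNint.integrableOn)]
  have hJanti : ∀ a b : ℝ, a ≤ b → J b ≤ J a := by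
    intro a b hab
    rw [hJsplit a b hab]
    have : 0 ≤ ∫ t in Set.Ioc a b, N t := setIntegral_nonneg measurableSet_Ioc fun t _ => (hNpos t).le
    linarith
  have hJpos : ∀ s, 0 < J s := by
    intro s
    rw [hJsplit s (s+1) (by linarith)]
    have h1 : 0 < ∫ t in Set.Ioc s (s+1), N t := hIocpos s (s+1) (by linarith)
    have h2 : 0 ≤ J (s+1) := setIntegral_nonneg measurableSet_Ioi fun t _ => (hNpos t).le
    linarith
  have hJmsplit : ∀ a b : ℝ, a ≤ b → Jm b = Jm a + ∫ t in Set.Ioc a b, N t := by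
    intro a b hab
    rw [hJmdef]
    simp only
    rw [← Set.Iic_union_Ioc_eq_Iic hab]
    rw [setIntegral_union (Set.Iic_disjoint_Ioc le_rfl) measurableSet_Ioc
      (hNint.integrableOn) (hNint.integrableOn)]
  have hJmmono : ∀ a b : ℝ, a ≤ b → Jm a ≤ Jm b := by
    intro a b hab
    rw [hJmsplit a b hab]
    have : 0 ≤ ∫ t in Set.Ioc a b, N t := setIntegral_nonneg measurableSet_Ioc fun t _ => (hNpos t).le
    linarith
  have hJmpos : ∀ s, 0 < Jm s := by
    intro s
    rw [hJmsplit (s-1) s (by linarith)]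
    have h1 : 0 < ∫ t in Set.Ioc (s-1) s, N t := hIocpos (s-1) s (by linarith)
    have h2 : 0 ≤ Jm (s-1) := setIntegral_nonneg measurableSet_Iic fun t _ => (hNpos t).le
    linarith
  -- interval comparison
  have hcomp : ∀ s T : ℝ, s ≤ T → (∀ t, t ∈ Set.Icc s T → w t ≤ 0) →
      c₁ * (Φ T - Φ s) ≤ c₂ * (Φ (θ T) - Φ (θ s)) := by
    intro s T hsT hwle
    have hcont2 : Continuous
        (fun t => c₂ * (N (θ t) * ((deriv (deriv ψ₂) (θ t))⁻¹ * deriv (deriv ψ₁) t))) := by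
      apply Continuous.mul continuous_const
      apply Continuous.mul (hNcont.comp hθcont)
      exact ((hq₂cont.comp hθcont).inv₀ (fun t => ne_of_gt (hq₂ (θ t)))).mul hq₁cont
    have hint1 : IntervalIntegrable (fun t => c₁ * N t) volume s T :=
      ((continuous_const.mul hNcont).intervalIntegrable _ _)
    have hint2 : IntervalIntegrable
        (fun t => c₂ * (N (θ t) * ((deriv (deriv ψ₂) (θ t))⁻¹ * deriv (deriv ψ₁) t)))
        volume s T := hcont2.intervalIntegrable _ _
    have hpt : ∀ t ∈ Set.Icc s T, c₁ * N t
        ≤ c₂ * (N (θ t) * ((deriv (deriv ψ₂) (θ t))⁻¹ * deriv (deriv ψ₁) t)) := by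
      intro t ht
      have e₁ : c₁ * N t = fμ (deriv ψ₁ t) * deriv (deriv ψ₁) t * deriv H (g₁ t) := (heq₁ t).symm
      have e₂ : fμ (deriv ψ₁ t) * deriv (deriv ψ₂) (θ t) * deriv H (g₂ (θ t)) = c₂ * N (θ t) := by
        have h := heq₂ (θ t)
        rw [hθval t] at h
        simp only [hg₂def]
        rw [hθval t]
        exact h
      have hfp : 0 < fμ (deriv ψ₁ t) := hfpos _ ⟨(hx₁ t).1.le, (hx₁ t).2.le⟩
      have hle : deriv H (g₁ t) ≤ deriv H (g₂ (θ t)) := by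
        apply hH'mono.monotone
        have hwt := hwle t ht
        rw [hwdef] at hwt
        simp only at hwt
        linarith
      calc c₁ * N t = fμ (deriv ψ₁ t) * deriv (deriv ψ₁) t * deriv H (g₁ t) := e₁
        _ ≤ fμ (deriv ψ₁ t) * deriv (deriv ψ₁) t * deriv H (g₂ (θ t)) := by
            rw [mul_assoc, mul_assoc]
            exact mul_le_mul_of_nonneg_left
              (mul_le_mul_of_nonneg_left hle (hq₁ t).le) hfp.le
        _ = (fμ (deriv ψ₁ t) * deriv (deriv ψ₂) (θ t) * deriv H (g₂ (θ t)))
            * ((deriv (deriv ψ₂) (θ t))⁻¹ * deriv (deriv ψ₁) t) := by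
            field_simp
            rw [eq_div_iff (ne_of_gt (hq₂ (θ t)))]
        _ = c₂ * N (θ t) * ((deriv (deriv ψ₂) (θ t))⁻¹ * deriv (deriv ψ₁) t) := by rw [e₂]
        _ = c₂ * (N (θ t) * ((deriv (deriv ψ₂) (θ t))⁻¹ * deriv (deriv ψ₁) t)) := by ring
    have hmono := intervalIntegral.integral_mono_on hsT hint1 hint2 hpt
    have hev1 : (∫ t in s..T, c₁ * N t) = c₁ * (Φ T - Φ s) := by
      rw [intervalIntegral.integral_const_mul, ← hΦsub]
    have hev2 : (∫ t in s..T, c₂ * (N (θ t) * ((deriv (deriv ψ₂) (θ t))⁻¹ * deriv (deriv ψ₁) t)))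
        = c₂ * (Φ (θ T) - Φ (θ s)) := by
      have hAd : ∀ t, HasDerivAt (fun u => c₂ * Φ (θ u))
          (c₂ * (N (θ t) * ((deriv (deriv ψ₂) (θ t))⁻¹ * deriv (deriv ψ₁) t))) t := by
        intro t
        exact ((hΦd (θ t)).comp t (hθd t)).const_mul c₂
      rw [intervalIntegral.integral_eq_sub_of_hasDerivAt (fun t _ => hAd t) hint2]
      ring
    rw [hev1, hev2] at hmono
    exact hmono
  -- right ray lemma
  have hray_right : ∀ s, (∀ t, s ≤ t → w t ≤ 0) → θ s < s := by
    intro s hwle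
    have h1 : Tendsto (fun T => c₁ * (Φ T - Φ s)) atTop (nhds (c₁ * J s)) := by
      apply Tendsto.const_mul
      have ht := intervalIntegral_tendsto_integral_Ioi s (hNint.integrableOn) tendsto_id
      apply ht.congr
      intro T
      exact (hΦsub s T).symm
    have h2 : Tendsto (fun T => c₂ * (Φ (θ T) - Φ (θ s))) atTop (nhds (c₂ * J (θ s))) := by
      apply Tendsto.const_mul
      have ht := intervalIntegral_tendsto_integral_Ioi (θ s) (hNint.integrableOn) hθtop
      apply ht.congr
      intro T
      exact (hΦsub (θ s) (θ T)).symm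
    have hlim : c₁ * J s ≤ c₂ * J (θ s) := by
      apply le_of_tendsto_of_tendsto h1 h2
      filter_upwards [eventually_ge_atTop s] with T hT
      exact hcomp s T hT (fun t ht => hwle t ht.1)
    by_contra hge
    push_neg at hge
    have h3 : J (θ s) ≤ J s := hJanti s (θ s) hge
    nlinarith [mul_le_mul_of_nonneg_left h3 hc₁.le, mul_pos (sub_pos.mpr hlt) (hJpos (θ s))]
  -- left ray lemma
  have hray_left : ∀ s, (∀ t, t ≤ s → w t ≤ 0) → s < θ s := by
    intro s hwle
    have h1 : Tendsto (fun T => c₁ * (Φ s - Φ T)) atBot (nhds (c₁ * Jm s)) := by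
      apply Tendsto.const_mul
      have ht := intervalIntegral_tendsto_integral_Iic s (hNint.integrableOn) tendsto_id
      apply ht.congr
      intro T
      exact (hΦsub T s).symm
    have h2 : Tendsto (fun T => c₂ * (Φ (θ s) - Φ (θ T))) atBot (nhds (c₂ * Jm (θ s))) := by
      apply Tendsto.const_mul
      have ht := intervalIntegral_tendsto_integral_Iic (θ s) (hNint.integrableOn) hθbot
      apply ht.congr
      intro T
      exact (hΦsub (θ T) (θ s)).symm
    have hlim : c₁ * Jm s ≤ c₂ * Jm (θ s) := by
      apply le_of_tendsto_of_tendsto h1 h2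
      filter_upwards [eventually_le_atBot s] with T hT
      exact hcomp T s hT (fun t ht => hwle t ht.2)
    by_contra hge
    push_neg at hge
    have h3 : Jm (θ s) ≤ Jm s := hJmmono (θ s) s hge
    nlinarith [mul_le_mul_of_nonneg_left h3 hc₁.le, mul_pos (sub_pos.mpr hlt) (hJmpos (θ s))]
  have hH'pos : ∀ y, 0 < deriv H y := fun y => hε.trans (hH'lb y)
  -- no negative local minimum
  have hlocmin : ∀ s₀, IsLocalMin w s₀ → w s₀ < 0 → False := by
    intro s₀ hmin hneg
    have hw0 : deriv (deriv ψ₁) s₀ * (s₀ - θ s₀) = 0 := hmin.hasDerivAt_eq_zero (hwd s₀)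
    have hθs₀ : θ s₀ = s₀ := by
      rcases mul_eq_zero.mp hw0 with h | h
      · exact absurd h (ne_of_gt (hq₁ s₀))
      · linarith
    have hqle : deriv (deriv ψ₁) s₀ ≤ deriv (deriv ψ₂) s₀ := by
      by_contra hgt
      push_neg at hgt
      set φ : ℝ → ℝ := fun s => s - θ s with hφdef
      have hφd : HasDerivAt φ (1 - (deriv (deriv ψ₂) (θ s₀))⁻¹ * deriv (deriv ψ₁) s₀) s₀ :=
        (hasDerivAt_id s₀).sub (hθd s₀)
      rw [hθs₀] at hφd
      have hdneg : 1 - (deriv (deriv ψ₂) s₀)⁻¹ * deriv (deriv ψ₁) s₀ < 0 := by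
        have h1 : 1 < (deriv (deriv ψ₂) s₀)⁻¹ * deriv (deriv ψ₁) s₀ := by
          rw [← div_eq_inv_mul]
          exact (one_lt_div (hq₂ s₀)).mpr hgt
        linarith
      have hslope := hasDerivAt_iff_tendsto_slope.mp hφd
      have hsubne : Set.Iio s₀ ⊆ {s₀}ᶜ := fun t ht => by
        simp only [Set.mem_compl_iff, Set.mem_singleton_iff]
        exact ne_of_lt ht
      have hev : ∀ᶠ t in nhdsWithin s₀ (Set.Iio s₀), slope φ s₀ t < 0 :=
        (hslope.eventually (eventually_lt_nhds hdneg)).filter_mono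
          (nhdsWithin_mono s₀ hsubne)
      have hφs₀ : φ s₀ = 0 := by simp only [hφdef]; rw [hθs₀]; ring
      have hev2 : ∀ᶠ t in nhdsWithin s₀ (Set.Iio s₀), 0 < φ t := by
        filter_upwards [hev, self_mem_nhdsWithin] with t ht ht2
        rw [slope_def_field] at ht
        have hts : t - s₀ < 0 := sub_neg.mpr ht2
        rcases div_neg_iff.mp ht with ⟨h1, h2⟩ | ⟨h1, h2⟩
        · linarith
        · linarith
      have hmin' : ∀ᶠ t in nhds s₀, w s₀ ≤ w t := hmin
      have hev3 : ∀ᶠ t in nhdsWithin s₀ (Set.Iio s₀), w s₀ ≤ w t :=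
        hmin'.filter_mono nhdsWithin_le_nhds
      obtain ⟨u, hu, hsubu⟩ := eventually_iff_exists_mem.mp (hev2.and hev3)
      obtain ⟨a, ha, hIoo⟩ := mem_nhdsLT_iff_exists_Ioo_subset.mp hu
      have hmono : StrictMonoOn w (Set.Icc a s₀) := by
        apply strictMonoOn_of_deriv_pos (convex_Icc a s₀) hwcont.continuousOn
        intro t ht
        rw [interior_Icc] at ht
        rw [hderivw t]
        have hphi := (hsubu _ (hIoo ht)).1
        simp only [hφdef] at hphi
        exact mul_pos (hq₁ t) hphi
      have haIio : a < s₀ := ha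
      set m := (a + s₀)/2 with hm
      have hmIoo : m ∈ Set.Ioo a s₀ := ⟨by rw [hm]; linarith, by rw [hm]; linarith⟩
      have h1 : w m < w s₀ :=
        hmono ⟨hmIoo.1.le, hmIoo.2.le⟩ ⟨haIio.le, le_refl s₀⟩ hmIoo.2
      have h2 : w s₀ ≤ w m := (hsubu _ (hIoo hmIoo)).2
      linarith
    have hgw : g₁ s₀ - g₂ s₀ < 0 := by
      have hws : w s₀ = g₁ s₀ - g₂ (θ s₀) := by rw [hwdef]
      rw [hws, hθs₀] at hneg
      exact hneg
    have hH'lt : deriv H (g₁ s₀) < deriv H (g₂ s₀) := hH'mono (by linarith)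
    have hx12 : deriv ψ₂ s₀ = deriv ψ₁ s₀ := by
      have := hθval s₀
      rwa [hθs₀] at this
    have hfp : 0 < fμ (deriv ψ₁ s₀) := hfpos _ ⟨(hx₁ s₀).1.le, (hx₁ s₀).2.le⟩
    have hchain : c₁ * N s₀ < c₂ * N s₀ := by
      have hg₂s₀ : g₂ s₀ = s₀ * deriv ψ₁ s₀ - ψ₂ s₀ := by
        simp only [hg₂def]
        rw [hx12]
      have e₂ : fμ (deriv ψ₁ s₀) * deriv (deriv ψ₂) s₀ * deriv H (g₂ s₀) = c₂ * N s₀ := by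
        have h := heq₂ s₀
        rw [hx12] at h
        rw [hg₂s₀]
        exact h
      calc c₁ * N s₀ = fμ (deriv ψ₁ s₀) * deriv (deriv ψ₁) s₀ * deriv H (g₁ s₀) := (heq₁ s₀).symm
        _ ≤ fμ (deriv ψ₁ s₀) * deriv (deriv ψ₂) s₀ * deriv H (g₁ s₀) :=
            mul_le_mul_of_nonneg_right (mul_le_mul_of_nonneg_left hqle hfp.le) (hH'pos _).le
        _ < fμ (deriv ψ₁ s₀) * deriv (deriv ψ₂) s₀ * deriv H (g₂ s₀) :=
            mul_lt_mul_of_pos_left hH'lt (mul_pos hfp (hq₂ s₀))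
        _ = c₂ * N s₀ := e₂
    nlinarith [hNpos s₀]
  -- w is nonnegative everywhere
  have hwnonneg : ∀ s, 0 ≤ w s := by
    by_contra hcon
    push_neg at hcon
    obtain ⟨sb, hsb⟩ := hcon
    by_cases hR : ∀ t, sb ≤ t → w t ≤ 0
    · have hmonoR : StrictMonoOn w (Set.Ici sb) := by
        apply strictMonoOn_of_deriv_pos (convex_Ici sb) hwcont.continuousOn
        intro t ht
        rw [interior_Ici] at ht
        rw [hderivw t]
        have hθt : θ t < t := hray_right t (fun u hu => hR u (le_trans ht.le hu))
        exact mul_pos (hq₁ t) (by linarith)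
      by_cases hL : ∀ t, t ≤ sb → w t ≤ 0
      · have h1 := hray_right sb hR
        have h2 := hray_left sb hL
        linarith
      · push_neg at hL
        obtain ⟨p, hpsb, hp⟩ := hL
        have hppsb : p < sb := by
          rcases eq_or_lt_of_le hpsb with h | h
          · exfalso; rw [h] at hp; linarith
          · exact h
        obtain ⟨s₀, hs₀mem, hs₀min⟩ := (isCompact_Icc (a := p) (b := sb)).exists_isMinOn
          (Set.nonempty_Icc.mpr hppsb.le) hwcont.continuousOn
        have hws₀ : w s₀ ≤ w sb := isMinOn_iff.mp hs₀min sb (Set.right_mem_Icc.mpr hppsb.le)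
        have hs₀p : p < s₀ := by
          rcases eq_or_lt_of_le hs₀mem.1 with h | h
          · exfalso; rw [h] at hp; linarith
          · exact h
        have hlm : IsLocalMin w s₀ := by
          have hminon : IsMinOn w (Set.Icc p (sb + 1)) s₀ := by
            rw [isMinOn_iff]
            intro t ht
            rcases le_total t sb with h | h
            · exact isMinOn_iff.mp hs₀min t ⟨ht.1, h⟩
            · calc w s₀ ≤ w sb := hws₀
                _ ≤ w t := hmonoR.monotoneOn Set.self_mem_Ici h h
          exact hminon.isLocalMin (Icc_mem_nhds hs₀p (by linarith [hs₀mem.2]))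
        exact hlocmin s₀ hlm (by linarith)
    · push_neg at hR
      obtain ⟨q, hsbq, hq⟩ := hR
      have hsbq' : sb < q := by
        rcases eq_or_lt_of_le hsbq with h | h
        · exfalso; rw [← h] at hq; linarith
        · exact h
      by_cases hL : ∀ t, t ≤ sb → w t ≤ 0
      · have hantiL : StrictAntiOn w (Set.Iic sb) := by
          apply strictAntiOn_of_deriv_neg (convex_Iic sb) hwcont.continuousOn
          intro t ht
          rw [interior_Iic] at ht
          rw [hderivw t]
          have hθt : t < θ t := hray_left t (fun u hu => hL u (le_trans hu ht.le))
          nlinarith [hq₁ t]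
        obtain ⟨s₀, hs₀mem, hs₀min⟩ := (isCompact_Icc (a := sb) (b := q)).exists_isMinOn
          (Set.nonempty_Icc.mpr hsbq) hwcont.continuousOn
        have hws₀ : w s₀ ≤ w sb := isMinOn_iff.mp hs₀min sb (Set.left_mem_Icc.mpr hsbq)
        have hs₀q : s₀ < q := by
          rcases eq_or_lt_of_le hs₀mem.2 with h | h
          · exfalso; rw [h] at hws₀; linarith
          · exact h
        have hlm : IsLocalMin w s₀ := by
          have hminon : IsMinOn w (Set.Icc (sb - 1) q) s₀ := by
            rw [isMinOn_iff]
            intro t ht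
            rcases le_total t sb with h | h
            · calc w s₀ ≤ w sb := hws₀
                _ ≤ w t := hantiL.antitoneOn h Set.self_mem_Iic h
            · exact isMinOn_iff.mp hs₀min t ⟨h, ht.2⟩
          exact hminon.isLocalMin (Icc_mem_nhds (by linarith [hs₀mem.1]) hs₀q)
        exact hlocmin s₀ hlm (by linarith)
      · push_neg at hL
        obtain ⟨p, hpsb, hp⟩ := hL
        have hpq : p < q := by linarith
        obtain ⟨s₀, hs₀mem, hs₀min⟩ := (isCompact_Icc (a := p) (b := q)).exists_isMinOn
          (Set.nonempty_Icc.mpr hpq.le) hwcont.continuousOn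
        have hws₀ : w s₀ ≤ w sb := isMinOn_iff.mp hs₀min sb ⟨hpsb, hsbq⟩
        have hs₀p : p < s₀ := by
          rcases eq_or_lt_of_le hs₀mem.1 with h | h
          · exfalso; rw [h] at hp; linarith
          · exact h
        have hs₀q : s₀ < q := by
          rcases eq_or_lt_of_le hs₀mem.2 with h | h
          · exfalso; rw [h] at hws₀; linarith
          · exact h
        have hlm : IsLocalMin w s₀ := hs₀min.isLocalMin (Icc_mem_nhds hs₀p hs₀q)
        exact hlocmin s₀ hlm (by linarith)
  -- hence ψ₁ ≤ ψ₂ everywhere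
  have hψle : ∀ σ, ψ₁ σ ≤ ψ₂ σ := by
    intro σ
    have hkey : deriv ψ₁ σ * (σ - θ σ) ≤ ψ₂ σ - ψ₂ (θ σ) := by
      rcases lt_trichotomy (θ σ) σ with h | h | h
      · obtain ⟨ξ, hξ, hsl⟩ := exists_hasDerivAt_eq_slope ψ₂ (deriv ψ₂) h
          (hψ₂diff.continuous.continuousOn) (fun x _ => (hψ₂diff x).hasDerivAt)
        have hge : deriv ψ₂ (θ σ) ≤ deriv ψ₂ ξ := hx₂mono.monotone hξ.1.le
        rw [hθval σ, hsl] at hge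
        rw [le_div_iff₀ (by linarith)] at hge
        linarith
      · rw [h]; simp
      · obtain ⟨ξ, hξ, hsl⟩ := exists_hasDerivAt_eq_slope ψ₂ (deriv ψ₂) h
          (hψ₂diff.continuous.continuousOn) (fun x _ => (hψ₂diff x).hasDerivAt)
        have hle2 : deriv ψ₂ ξ ≤ deriv ψ₂ (θ σ) := hx₂mono.monotone hξ.2.le
        rw [hθval σ, hsl] at hle2
        rw [div_le_iff₀ (by linarith)] at hle2
        have hr : deriv ψ₁ σ * (σ - θ σ) = -(deriv ψ₁ σ * (θ σ - σ)) := by ring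
        linarith [hr]
    have hw : 0 ≤ w σ := hwnonneg σ
    have hgg : g₂ (θ σ) ≤ g₁ σ := by
      have hws : w σ = g₁ σ - g₂ (θ σ) := by rw [hwdef]
      linarith [hws ▸ hw]
    have hg2 : g₂ (θ σ) = θ σ * deriv ψ₁ σ - ψ₂ (θ σ) := by
      simp only [hg₂def]
      rw [hθval σ]
    have hg1 : g₁ σ = σ * deriv ψ₁ σ - ψ₁ σ := by simp only [hg₁def]
    rw [hg1, hg2] at hgg
    have hr2 : deriv ψ₁ σ * (σ - θ σ) = σ * deriv ψ₁ σ - θ σ * deriv ψ₁ σ := by ring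
    linarith [hkey, hgg, hr2]
  -- conclusion via the normalization
  have hfeq : (fun z => ψ₂ z * N z - ψ₁ z * N z) = fun _ => (0:ℝ) := by
    have hcont : Continuous (fun z => ψ₂ z * N z - ψ₁ z * N z) :=
      (hψ₂diff.continuous.mul hNcont).sub (hψ₁diff.continuous.mul hNcont)
    have hintd : Integrable (fun z => ψ₂ z * N z - ψ₁ z * N z) := hint₂.sub hint₁
    have hnn : (0:ℝ → ℝ) ≤ (fun z => ψ₂ z * N z - ψ₁ z * N z) := by
      intro z
      simp only [Pi.zero_apply]
      have := mul_le_mul_of_nonneg_right (hψle z) (hNpos z).le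
      linarith
    have hI : (∫ z, (ψ₂ z * N z - ψ₁ z * N z)) = 0 := by
      rw [integral_sub hint₂ hint₁, hzero₂, hzero₁]; ring
    have hae := (integral_eq_zero_iff_of_nonneg hnn hintd).mp hI
    exact (Continuous.ae_eq_iff_eq volume hcont continuous_const).mp hae
  have hψeq : ψ₁ = ψ₂ := by
    funext z
    have hz := congrFun hfeq z
    have hNz := hNpos z
    nlinarith [hz]
  have hceq : c₁ * N 0 = c₂ * N 0 := by
    have h1 := heq₁ 0
    rw [hψeq] at h1
    rw [← h1, ← heq₂ 0]
  nlinarith [hNpos 0]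
/-- If `(ψ₁,c₁)` and `(ψ₂,c₂)` both solve the differential
system (D), then `c₁ = c₂`. -/
theorem stmt15 (fμ H : ℝ → ℝ) (ε K : ℝ)
    (hε : 0 < ε) (hεK : ε < K)
    (hfC1 : ContDiffOn ℝ 1 fμ (Set.Icc 0 1))
    (hfpos : ∀ x ∈ Set.Icc (0 : ℝ) 1, 0 < fμ x)
    (hH : ContDiff ℝ 2 H)
    (hHconv : StrictConvexOn ℝ Set.univ H)
    (hH'lb : ∀ x : ℝ, ε < deriv H x) (hH'ub : ∀ x : ℝ, deriv H x < K)
    (N : ℝ → ℝ) (hN : ∀ s, N s = Real.exp (-(s ^ 2) / 2) / Real.sqrt (2 * Real.pi))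
    (ψ₁ ψ₂ : ℝ → ℝ) (c₁ c₂ : ℝ)
    (hψ₁C2 : ContDiff ℝ 2 ψ₁)
    (heq₁ : ∀ s : ℝ,
      fμ (deriv ψ₁ s) * deriv (deriv ψ₁) s * deriv H (s * deriv ψ₁ s - ψ₁ s) = c₁ * N s)
    (hbot₁ : Tendsto (deriv ψ₁) atBot (nhds 0))
    (htop₁ : Tendsto (deriv ψ₁) atTop (nhds 1))
    (hint₁ : Integrable (fun z => ψ₁ z * N z))
    (hzero₁ : (∫ z, ψ₁ z * N z) = 0)
    (hψ₂C2 : ContDiff ℝ 2 ψ₂)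
    (heq₂ : ∀ s : ℝ,
      fμ (deriv ψ₂ s) * deriv (deriv ψ₂) s * deriv H (s * deriv ψ₂ s - ψ₂ s) = c₂ * N s)
    (hbot₂ : Tendsto (deriv ψ₂) atBot (nhds 0))
    (htop₂ : Tendsto (deriv ψ₂) atTop (nhds 1))
    (hint₂ : Integrable (fun z => ψ₂ z * N z))
    (hzero₂ : (∫ z, ψ₂ z * N z) = 0) :
    c₁ = c₂ := by
  obtain ⟨hNpos, hNcont, hNint⟩ := N_props N hN
  obtain ⟨hc₁, hx₁, hq₁⟩ := sol_pos fμ H ε hε hfpos hH'lb N hNpos ψ₁ c₁ hψ₁C2 heq₁ hbot₁ htop₁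
  obtain ⟨hc₂, hx₂, hq₂⟩ := sol_pos fμ H ε hε hfpos hH'lb N hNpos ψ₂ c₂ hψ₂C2 heq₂ hbot₂ htop₂
  rcases lt_trichotomy c₁ c₂ with h | h | h
  · exact absurd (key fμ H ε K hε hεK hfpos hH hHconv hH'lb N hNpos hNcont hNint
      ψ₂ ψ₁ c₂ c₁ hψ₂C2 heq₂ hbot₂ htop₂ hint₂ hzero₂
      hψ₁C2 heq₁ hbot₁ htop₁ hint₁ hzero₁
      hc₂ hx₂ hq₂ hc₁ hx₁ hq₁ h) id
  · exact h
  · exact absurd (key fμ H ε K hε hεK hfpos hH hHconv hH'lb N hNpos hNcont hNint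
      ψ₁ ψ₂ c₁ c₂ hψ₁C2 heq₁ hbot₁ htop₁ hint₁ hzero₁
      hψ₂C2 heq₂ hbot₂ htop₂ hint₂ hzero₂
      hc₁ hx₁ hq₁ hc₂ hx₂ hq₂ h) id
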